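/- arXiv:2505.05069 — 4 statements merged into one kernel-verified Lean document; each statement's English description precedes it below -/
import Mathlib

section
/- Let λ > 1 and let E : ℕ → ℝ satisfy κ₁·λⁿ ≤ E(n) ≤ κ₂·λⁿ for all n ≥ 1, with κ₁, κ₂ > 0. Define C(n) = (1/n)·∑_{d | n} μ(n/d)·E(d). Then there exists a constant σ₁ > 0 such that ∑_{n=1}^{N} C(n) ≥ σ₁·λᴺ/N for all sufficiently large N. -/
open Finset

theorem stmt_3 (lam κ₁ κ₂ : ℝ) (hlam : 1 < lam) (hκ₁ : 0 < κ₁) (hκ₂ : 0 < κ₂)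
    (E : ℕ → ℝ)
    (hE : ∀ n : ℕ, 1 ≤ n → κ₁ * lam ^ n ≤ E n ∧ E n ≤ κ₂ * lam ^ n)
    (C : ℕ → ℝ)
    (hC : ∀ n : ℕ, 1 ≤ n →
      C n = (1 / (n : ℝ)) *
        ∑ d ∈ n.divisors, ((ArithmeticFunction.moebius (n / d) : ℤ) : ℝ) * E d) :
    ∃ σ₁ : ℝ, 0 < σ₁ ∧ ∃ N₁ : ℕ, ∀ N : ℕ, N₁ ≤ N →
      σ₁ * lam ^ N / N ≤ ∑ n ∈ Finset.Icc 1 N, C n := by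
  have hlam0 : (0:ℝ) < lam := lt_trans one_pos hlam
  have hlam1 : (0:ℝ) < lam - 1 := sub_pos.2 hlam
  set A : ℝ := κ₂ * lam / (lam - 1) with hAdef
  have hApos : 0 < A := div_pos (mul_pos hκ₂ hlam0) hlam1
  -- key lower bound: n * C n ≥ κ₁ λ^n − A λ^(n/2)
  have key : ∀ n : ℕ, 1 ≤ n → κ₁ * lam ^ n - A * lam ^ (n / 2) ≤ (n : ℝ) * C n := by
    intro n hn
    have hn0 : (0:ℝ) < n := by exact_mod_cast hn
    rw [hC n hn, ← mul_assoc, mul_one_div, div_self (ne_of_gt hn0), one_mul]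
    have hmem : n ∈ n.divisors := Nat.mem_divisors_self n (by omega)
    rw [← Finset.add_sum_erase _ _ hmem, Nat.div_self (by omega : 0 < n)]
    simp only [ArithmeticFunction.moebius_apply_one, Int.cast_one, one_mul]
    have hEn := hE n hn
    have hrest : -(A * lam ^ (n / 2)) ≤
        ∑ d ∈ (n.divisors).erase n,
          ((ArithmeticFunction.moebius (n / d) : ℤ) : ℝ) * E d := by
      have step1 : ∑ d ∈ (n.divisors).erase n, -(κ₂ * lam ^ d) ≤
          ∑ d ∈ (n.divisors).erase n,
            ((ArithmeticFunction.moebius (n / d) : ℤ) : ℝ) * E d := by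
        apply Finset.sum_le_sum
        intro d hd
        have hd' := Finset.mem_of_mem_erase hd
        have hd1 : 1 ≤ d := Nat.pos_of_mem_divisors hd'
        have hEd := hE d hd1
        have hEdpos : 0 < E d := lt_of_lt_of_le (mul_pos hκ₁ (pow_pos hlam0 d)) hEd.1
        have hmu : (-1 : ℝ) ≤ ((ArithmeticFunction.moebius (n / d) : ℤ) : ℝ) := by
          have h := @ArithmeticFunction.abs_moebius_le_one (n / d)
          have h2 := (abs_le.mp h).1
          exact_mod_cast h2
        nlinarith [hEd.2, hEdpos]
      have hsubset : (n.divisors).erase n ⊆ Finset.Icc 1 (n / 2) := by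
        intro d hd
        have hdne := Finset.ne_of_mem_erase hd
        have hd' := Finset.mem_of_mem_erase hd
        have hdvd : d ∣ n := Nat.dvd_of_mem_divisors hd'
        have hd1 : 1 ≤ d := Nat.pos_of_mem_divisors hd'
        have hle : d * 2 ≤ n := by
          obtain ⟨k, hk⟩ := hdvd
          have hk2 : 2 ≤ k := by
            rcases k with _ | _ | k
            · omega
            · omega
            · omega
          calc d * 2 ≤ d * k := Nat.mul_le_mul_left d hk2
            _ = n := hk.symm
        exact Finset.mem_Icc.mpr ⟨hd1, (Nat.le_div_iff_mul_le (by norm_num)).mpr hle⟩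
      have step2 : ∑ d ∈ (n.divisors).erase n, κ₂ * lam ^ d ≤
          ∑ d ∈ Finset.Icc 1 (n / 2), κ₂ * lam ^ d := by
        apply Finset.sum_le_sum_of_subset_of_nonneg hsubset
        intro i _ _
        positivity
      have step3 : ∑ d ∈ Finset.Icc 1 (n / 2), κ₂ * lam ^ d ≤ A * lam ^ (n / 2) := by
        rw [← Finset.mul_sum]
        have hgeom : ∑ d ∈ Finset.range (n / 2 + 1), lam ^ d =
            (lam ^ (n / 2 + 1) - 1) / (lam - 1) := geom_sum_eq (ne_of_gt hlam) _
        have hsub : Finset.Icc 1 (n / 2) ⊆ Finset.range (n / 2 + 1) := by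
          intro i hi
          simp only [Finset.mem_Icc] at hi
          simp only [Finset.mem_range]; omega
        have h1 : ∑ d ∈ Finset.Icc 1 (n / 2), lam ^ d ≤
            ∑ d ∈ Finset.range (n / 2 + 1), lam ^ d := by
          apply Finset.sum_le_sum_of_subset_of_nonneg hsub
          intro i _ _; positivity
        have h2 : (lam ^ (n / 2 + 1) - 1) / (lam - 1) ≤ lam ^ (n / 2 + 1) / (lam - 1) :=
          (div_le_div_iff_of_pos_right hlam1).mpr (by linarith)
        have h3 : ∑ d ∈ Finset.Icc 1 (n / 2), lam ^ d ≤ lam ^ (n / 2 + 1) / (lam - 1) := by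
          rw [hgeom] at h1; linarith
        calc κ₂ * ∑ d ∈ Finset.Icc 1 (n / 2), lam ^ d ≤
              κ₂ * (lam ^ (n / 2 + 1) / (lam - 1)) := by
              exact mul_le_mul_of_nonneg_left h3 hκ₂.le
          _ = A * lam ^ (n / 2) := by rw [hAdef, pow_succ]; ring
      calc -(A * lam ^ (n / 2)) ≤ -∑ d ∈ (n.divisors).erase n, κ₂ * lam ^ d := by
            exact neg_le_neg (le_trans step2 step3)
        _ = ∑ d ∈ (n.divisors).erase n, -(κ₂ * lam ^ d) := by
            rw [Finset.sum_neg_distrib]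
        _ ≤ _ := step1
    linarith [hEn.1]
  -- choose m₀ so that for n ≥ n₀ := 2m₀+2, A λ^(n/2) ≤ (κ₁/2) λ^n
  obtain ⟨m₀, hm₀⟩ := pow_unbounded_of_one_lt (2 * A / κ₁) hlam
  set n₀ : ℕ := 2 * m₀ + 2 with hn₀def
  have hkey2 : ∀ n : ℕ, n₀ ≤ n → κ₁ / 2 * lam ^ n / n ≤ C n := by
    intro n hn
    have hn1 : 1 ≤ n := by omega
    have hn0 : (0:ℝ) < n := by exact_mod_cast hn1
    have hsplit : lam ^ n = lam ^ (n / 2) * lam ^ (n - n / 2) := by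
      rw [← pow_add]; congr 1; omega
    have hexp : m₀ ≤ n - n / 2 := by omega
    have hmono : lam ^ m₀ ≤ lam ^ (n - n / 2) := pow_le_pow_right₀ hlam.le hexp
    have hA2 : A * lam ^ (n / 2) ≤ κ₁ / 2 * lam ^ n := by
      rw [hsplit]
      have hAle : A ≤ κ₁ / 2 * lam ^ (n - n / 2) := by
        have : 2 * A / κ₁ < lam ^ (n - n / 2) := lt_of_lt_of_le hm₀ hmono
        rw [div_lt_iff₀ hκ₁] at this
        linarith
      have hpow : (0:ℝ) < lam ^ (n / 2) := pow_pos hlam0 _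
      calc A * lam ^ (n / 2) ≤ (κ₁ / 2 * lam ^ (n - n / 2)) * lam ^ (n / 2) :=
            mul_le_mul_of_nonneg_right hAle hpow.le
        _ = κ₁ / 2 * (lam ^ (n / 2) * lam ^ (n - n / 2)) := by ring
    have hk := key n hn1
    rw [div_le_iff₀ hn0]
    nlinarith [hk]
  have hnonneg : ∀ n : ℕ, n₀ ≤ n → 0 ≤ C n := by
    intro n hn
    refine le_trans ?_ (hkey2 n hn)
    have hn0 : (0:ℝ) < n := by exact_mod_cast (by omega : 1 ≤ n)
    positivity
  -- small terms
  set B : ℝ := ∑ n ∈ Finset.Ico 1 n₀, |C n| with hBdef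
  have hBnonneg : 0 ≤ B := Finset.sum_nonneg fun i _ => abs_nonneg _
  -- choose m₁ to kill B
  obtain ⟨m₁, hm₁⟩ := pow_unbounded_of_one_lt (16 * B / (κ₁ * (lam - 1))) hlam
  refine ⟨κ₁ / 4, by positivity, max n₀ (max (2 * m₁) 2), ?_⟩
  intro N hN
  have hNn₀ : n₀ ≤ N := le_trans (le_max_left _ _) hN
  have hN2 : 2 ≤ N := le_trans (le_trans (le_max_right _ _) (le_max_right _ _)) hN
  have hNm₁ : 2 * m₁ ≤ N := le_trans (le_trans (le_max_left _ _) (le_max_right _ _)) hN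
  have hN0 : (0:ℝ) < N := by exact_mod_cast (by omega : 0 < N)
  -- split the sum
  have hsplit : ∑ n ∈ Finset.Icc 1 N, C n =
      (∑ n ∈ Finset.Ico 1 n₀, C n) + ∑ n ∈ Finset.Ico n₀ (N + 1), C n := by
    rw [← Finset.Ico_add_one_right_eq_Icc]
    exact (Finset.sum_Ico_consecutive _ (by omega) (by omega)).symm
  have h1 : -B ≤ ∑ n ∈ Finset.Ico 1 n₀, C n := by
    rw [hBdef, ← Finset.sum_neg_distrib]
    exact Finset.sum_le_sum fun i _ => neg_abs_le _
  have h2 : C N ≤ ∑ n ∈ Finset.Ico n₀ (N + 1), C n := by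
    apply Finset.single_le_sum (f := C)
    · intro i hi
      exact hnonneg i (Finset.mem_Ico.mp hi).1
    · exact Finset.mem_Ico.mpr ⟨hNn₀, by omega⟩
  have hCN : κ₁ / 2 * lam ^ N / N ≤ C N := hkey2 N hNn₀
  -- bound B by (κ₁/4) λ^N / N
  have hBsmall : B ≤ κ₁ / 4 * lam ^ N / N := by
    have hsplitN : lam ^ N = lam ^ (N - N / 2) * lam ^ (N / 2) := by
      rw [← pow_add]; congr 1; omega
    have hmono : lam ^ m₁ ≤ lam ^ (N - N / 2) := pow_le_pow_right₀ hlam.le (by omega)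
    have hBern : 1 + (N / 2 : ℕ) * (lam - 1) ≤ lam ^ (N / 2) := by
      have := one_add_mul_le_pow (by linarith : (-2:ℝ) ≤ lam - 1) (N / 2)
      simpa using this
    have hhalf : ((N:ℝ) - 1) / 2 ≤ ((N / 2 : ℕ) : ℝ) := by
      have h0 : N ≤ 2 * (N / 2) + 1 := by omega
      have h' : (N:ℝ) ≤ 2 * ((N / 2 : ℕ) : ℝ) + 1 := by exact_mod_cast h0
      linarith
    have hNr : (N:ℝ) / 2 ≤ (N:ℝ) - 1 := by
      have : (2:ℝ) ≤ N := by exact_mod_cast hN2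
      linarith
    -- λ^(N/2) ≥ (N/4)(λ-1) ≥ N (λ-1)/4
    have hpow : (N:ℝ) * (lam - 1) / 4 ≤ lam ^ (N / 2) := by
      have h1' : ((N:ℝ) / 4) * (lam - 1) ≤ ((N / 2 : ℕ) : ℝ) * (lam - 1) := by
        apply mul_le_mul_of_nonneg_right _ hlam1.le
        linarith
      nlinarith
    -- now λ^N / N ≥ λ^(N - N/2) * (λ - 1)/4
    have hfinal : lam ^ m₁ * (lam - 1) / 4 ≤ lam ^ N / N := by
      rw [hsplitN]
      rw [le_div_iff₀ hN0]
      have hp1 : (0:ℝ) < lam ^ (N - N / 2) := pow_pos hlam0 _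
      calc lam ^ m₁ * (lam - 1) / 4 * N ≤ lam ^ (N - N / 2) * ((lam - 1) / 4 * N) := by
            rw [mul_comm (lam ^ (N - N/2))]
            have : lam ^ m₁ * ((lam - 1) / 4 * N) ≤ lam ^ (N - N / 2) * ((lam - 1) / 4 * N) := by
              apply mul_le_mul_of_nonneg_right hmono
              positivity
            linarith [this]
        _ = lam ^ (N - N / 2) * ((N:ℝ) * (lam - 1) / 4) := by ring
        _ ≤ lam ^ (N - N / 2) * lam ^ (N / 2) := mul_le_mul_of_nonneg_left hpow hp1.le
    have hm₁' : B ≤ κ₁ / 4 * (lam ^ m₁ * (lam - 1) / 4) := by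
      rw [div_lt_iff₀ (by positivity : (0:ℝ) < κ₁ * (lam - 1))] at hm₁
      nlinarith [pow_pos hlam0 m₁]
    calc B ≤ κ₁ / 4 * (lam ^ m₁ * (lam - 1) / 4) := hm₁'
      _ ≤ κ₁ / 4 * (lam ^ N / N) := by
          apply mul_le_mul_of_nonneg_left hfinal (by positivity)
      _ = κ₁ / 4 * lam ^ N / N := by ring
  calc κ₁ / 4 * lam ^ N / N = κ₁ / 2 * lam ^ N / N - κ₁ / 4 * lam ^ N / N := by ring
    _ ≤ C N - B := by linarith
    _ ≤ (∑ n ∈ Finset.Ico 1 n₀, C n) + ∑ n ∈ Finset.Ico n₀ (N + 1), C n := by linarith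
    _ = ∑ n ∈ Finset.Icc 1 N, C n := hsplit.symm
end

section
/- Let λ > 1 and let E : ℕ → ℝ satisfy κ₁·λⁿ ≤ E(n) ≤ κ₂·λⁿ for all n ≥ 1, with κ₁, κ₂ > 0. Define C(n) = (1/n)·∑_{d | n} μ(n/d)·E(d). Then there exists a constant σ₂ > 0 such that ∑_{n=1}^{N} C(n) ≤ σ₂·λᴺ/N for all N ≥ 1. -/
lemma aux_sum_kpow (x : ℝ) (hx0 : 0 ≤ x) (hx1 : x < 1) (N : ℕ) :
    ∑ k ∈ Finset.range N, ((k : ℝ) + 1) * x ^ k ≤ 1 / (1 - x) ^ 2 := by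
  have hs : HasSum (fun n : ℕ => (((n + 1).choose 1 : ℕ) : ℝ) * x ^ n) (1 / (1 - x) ^ 2) := by
    have := hasSum_choose_mul_geometric_of_norm_lt_one (𝕜 := ℝ) 1
      (r := x) (by rw [Real.norm_eq_abs, abs_of_nonneg hx0]; exact hx1)
    simpa using this
  have hs' : HasSum (fun n : ℕ => ((n : ℝ) + 1) * x ^ n) (1 / (1 - x) ^ 2) := by
    convert hs using 2 with n
    simp [Nat.choose_one_right]
  exact (Summable.sum_le_tsum _ (fun k _ => by positivity) hs'.summable).trans_eq hs'.tsum_eq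

lemma aux_sum_pow_div (lam : ℝ) (hlam : 1 < lam) (N : ℕ) (hN : 1 ≤ N) :
    ∑ n ∈ Finset.Icc 1 N, lam ^ n / n ≤ (lam / (lam - 1)) ^ 2 * lam ^ N / N := by
  have hl0 : (0:ℝ) < lam := lt_trans one_pos hlam
  have hl1 : (0:ℝ) < lam - 1 := by linarith
  have hNR : (0:ℝ) < N := by exact_mod_cast hN
  set x : ℝ := 1 / lam with hx
  have hx0 : 0 ≤ x := by positivity
  have hx1 : x < 1 := by rw [hx, div_lt_one hl0]; exact hlam
  have hterm : ∀ n ∈ Finset.Icc 1 N,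
      lam ^ n / n ≤ (((N - n : ℕ) : ℝ) + 1) * x ^ (N - n) * (lam ^ N / N) := by
    intro n hn
    rw [Finset.mem_Icc] at hn
    obtain ⟨hn1, hnN⟩ := hn
    have hnR : (0:ℝ) < n := by exact_mod_cast hn1
    have hpow : lam ^ n = x ^ (N - n) * lam ^ N := by
      rw [hx, div_pow, one_pow, div_mul_eq_mul_div, pow_sub₀ _ (ne_of_gt hl0) hnN]
      field_simp
    have hnat : N ≤ n * (N - n + 1) := by
      calc N = (N - n) + n := by omega
        _ ≤ n * (N - n) + n * 1 := by
            exact Nat.add_le_add (Nat.le_mul_of_pos_left _ hn1) (by omega)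
        _ = n * (N - n + 1) := by ring
    have hfrac : (1:ℝ) / n ≤ (((N - n : ℕ) : ℝ) + 1) / N := by
      rw [div_le_div_iff₀ hnR hNR]
      have : (N:ℝ) ≤ (n:ℝ) * (((N - n : ℕ):ℝ) + 1) := by exact_mod_cast hnat
      linarith [this]
    calc lam ^ n / n = x ^ (N - n) * lam ^ N * (1 / n) := by rw [hpow]; ring
      _ ≤ x ^ (N - n) * lam ^ N * ((((N - n : ℕ) : ℝ) + 1) / N) :=
          mul_le_mul_of_nonneg_left hfrac (by positivity)
      _ = (((N - n : ℕ) : ℝ) + 1) * x ^ (N - n) * (lam ^ N / N) := by ring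
  have hS : ∑ n ∈ Finset.Icc 1 N, (((N - n : ℕ) : ℝ) + 1) * x ^ (N - n)
      ≤ 1 / (1 - x) ^ 2 := by
    have h1 : ∑ n ∈ Finset.Icc 1 N, (((N - n : ℕ) : ℝ) + 1) * x ^ (N - n)
        = ∑ i ∈ Finset.range N, (((N - 1 - i : ℕ) : ℝ) + 1) * x ^ (N - 1 - i) := by
      rw [← Finset.Ico_add_one_right_eq_Icc, Finset.sum_Ico_eq_sum_range]
      simp only [Nat.add_sub_cancel]
      refine Finset.sum_congr rfl fun i hi => ?_
      have : N - (1 + i) = N - 1 - i := by omega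
      rw [this]
    rw [h1, Finset.sum_range_reflect (fun k => ((k : ℝ) + 1) * x ^ k) N]
    exact aux_sum_kpow x hx0 hx1 N
  have hxval : 1 / (1 - x) ^ 2 = (lam / (lam - 1)) ^ 2 := by
    rw [hx]
    field_simp
  calc ∑ n ∈ Finset.Icc 1 N, lam ^ n / n
      ≤ ∑ n ∈ Finset.Icc 1 N, (((N - n : ℕ) : ℝ) + 1) * x ^ (N - n) * (lam ^ N / N) :=
        Finset.sum_le_sum hterm
    _ = (∑ n ∈ Finset.Icc 1 N, (((N - n : ℕ) : ℝ) + 1) * x ^ (N - n)) * (lam ^ N / N) :=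
        (Finset.sum_mul _ _ _).symm
    _ ≤ (1 / (1 - x) ^ 2) * (lam ^ N / N) :=
        mul_le_mul_of_nonneg_right hS (by positivity)
    _ = (lam / (lam - 1)) ^ 2 * lam ^ N / N := by rw [hxval]; ring

theorem stmt_4 (lam κ₁ κ₂ : ℝ) (hlam : 1 < lam) (hκ₁ : 0 < κ₁) (hκ₂ : 0 < κ₂)
    (E : ℕ → ℝ)
    (hE : ∀ n : ℕ, 1 ≤ n → κ₁ * lam ^ n ≤ E n ∧ E n ≤ κ₂ * lam ^ n)
    (C : ℕ → ℝ)
    (hC : ∀ n : ℕ, 1 ≤ n →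
      C n = (1 / (n : ℝ)) *
        ∑ d ∈ n.divisors, ((ArithmeticFunction.moebius (n / d) : ℤ) : ℝ) * E d) :
    ∃ σ₂ : ℝ, 0 < σ₂ ∧ ∀ N : ℕ, 1 ≤ N →
      ∑ n ∈ Finset.Icc 1 N, C n ≤ σ₂ * lam ^ N / N := by
  have hl0 : (0:ℝ) < lam := lt_trans one_pos hlam
  have hl1 : (0:ℝ) < lam - 1 := by linarith
  set K : ℝ := κ₂ * lam / (lam - 1) with hK
  have hKpos : 0 < K := by positivity
  -- bound on C
  have hCb : ∀ n : ℕ, 1 ≤ n → C n ≤ K * (lam ^ n / n) := by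
    intro n hn
    have hnR : (0:ℝ) < n := by exact_mod_cast hn
    rw [hC n hn]
    have hsum1 : ∑ d ∈ n.divisors, ((ArithmeticFunction.moebius (n / d) : ℤ) : ℝ) * E d
        ≤ ∑ d ∈ n.divisors, κ₂ * lam ^ d := by
      refine Finset.sum_le_sum fun d hd => ?_
      have hd1 : 1 ≤ d := (Nat.pos_of_mem_divisors hd)
      have hEd := hE d hd1
      have hEd0 : 0 ≤ E d := le_trans (by positivity) hEd.1
      have hmu : ((ArithmeticFunction.moebius (n / d) : ℤ) : ℝ) ≤ 1 := by
        have := ArithmeticFunction.moebius_eq_or (n / d)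
        rcases this with h | h | h <;> simp [h]
      calc ((ArithmeticFunction.moebius (n / d) : ℤ) : ℝ) * E d
          ≤ 1 * E d := mul_le_mul_of_nonneg_right hmu hEd0
        _ = E d := one_mul _
        _ ≤ κ₂ * lam ^ d := hEd.2
    have hsum2 : ∑ d ∈ n.divisors, κ₂ * lam ^ d ≤ ∑ d ∈ Finset.Icc 1 n, κ₂ * lam ^ d := by
      refine Finset.sum_le_sum_of_subset_of_nonneg ?_ (fun d _ _ => by positivity)
      intro d hd
      rw [Finset.mem_Icc]
      exact ⟨Nat.pos_of_mem_divisors hd, Nat.divisor_le hd⟩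
    have hgeo : ∑ d ∈ Finset.Icc 1 n, lam ^ d ≤ lam * lam ^ n / (lam - 1) := by
      have h1 : ∑ d ∈ Finset.Icc 1 n, lam ^ d = lam * ∑ i ∈ Finset.range n, lam ^ i := by
        rw [← Finset.Ico_add_one_right_eq_Icc, Finset.sum_Ico_eq_sum_range]
        simp only [Nat.succ_sub_one, Finset.mul_sum]
        exact Finset.sum_congr rfl fun i _ => by rw [pow_add, pow_one]
      rw [h1, geom_sum_eq (ne_of_gt hlam), mul_div_assoc]
      gcongr
      linarith [pow_pos hl0 n]
    calc (1 / (n : ℝ)) * ∑ d ∈ n.divisors, ((ArithmeticFunction.moebius (n / d) : ℤ) : ℝ) * E d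
        ≤ (1 / (n : ℝ)) * ∑ d ∈ Finset.Icc 1 n, κ₂ * lam ^ d :=
          mul_le_mul_of_nonneg_left (hsum1.trans hsum2) (by positivity)
      _ = (1 / (n : ℝ)) * (κ₂ * ∑ d ∈ Finset.Icc 1 n, lam ^ d) := by
          rw [← Finset.mul_sum]
      _ ≤ (1 / (n : ℝ)) * (κ₂ * (lam * lam ^ n / (lam - 1))) :=
          mul_le_mul_of_nonneg_left (mul_le_mul_of_nonneg_left hgeo (le_of_lt hκ₂))
            (by positivity)
      _ = K * (lam ^ n / n) := by rw [hK]; field_simp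
  refine ⟨K * (lam / (lam - 1)) ^ 2, by positivity, fun N hN => ?_⟩
  have hNR : (0:ℝ) < N := by exact_mod_cast hN
  calc ∑ n ∈ Finset.Icc 1 N, C n
      ≤ ∑ n ∈ Finset.Icc 1 N, K * (lam ^ n / n) := by
        refine Finset.sum_le_sum fun n hn => hCb n (Finset.mem_Icc.mp hn).1
    _ = K * ∑ n ∈ Finset.Icc 1 N, lam ^ n / n := (Finset.mul_sum _ _ _).symm
    _ ≤ K * ((lam / (lam - 1)) ^ 2 * lam ^ N / N) :=
        mul_le_mul_of_nonneg_left (aux_sum_pow_div lam hlam N hN) (le_of_lt hKpos)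
    _ = K * (lam / (lam - 1)) ^ 2 * lam ^ N / N := by ring
end

section
/- Let λ > 1 and let E : ℕ → ℝ satisfy κ₁·λⁿ ≤ E(n) ≤ κ₂·λⁿ for all n ≥ 1, with κ₁, κ₂ > 0, and let C(n) = (1/n)·∑_{d | n} μ(n/d)·E(d). Then ∑_{n=1}^{N} C(n) is comparable to λᴺ/N: there exist positive constants σ₁, σ₂ such that σ₁·λᴺ/N ≤ ∑_{n=1}^{N} C(n) ≤ σ₂·λᴺ/N for all sufficiently large N. -/
open Finset ArithmeticFunction Filter
open scoped ArithmeticFunction.Moebius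

set_option maxHeartbeats 1600000 in
theorem stmt_5 (lam κ₁ κ₂ : ℝ) (hlam : 1 < lam) (hκ₁ : 0 < κ₁) (hκ₂ : 0 < κ₂)
    (E : ℕ → ℝ)
    (hE : ∀ n : ℕ, 1 ≤ n → κ₁ * lam ^ n ≤ E n ∧ E n ≤ κ₂ * lam ^ n)
    (C : ℕ → ℝ)
    (hC : ∀ n : ℕ, 1 ≤ n →
      C n = (1 / (n : ℝ)) *
        ∑ d ∈ n.divisors, ((ArithmeticFunction.moebius (n / d) : ℤ) : ℝ) * E d) :
    ∃ σ₁ σ₂ : ℝ, 0 < σ₁ ∧ 0 < σ₂ ∧ ∃ N₁ : ℕ, ∀ N : ℕ, N₁ ≤ N →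
      σ₁ * lam ^ N / N ≤ ∑ n ∈ Finset.Icc 1 N, C n ∧
      ∑ n ∈ Finset.Icc 1 N, C n ≤ σ₂ * lam ^ N / N := by
  have hlam0 : (0:ℝ) < lam := by linarith
  have hlam1 : (0:ℝ) < lam - 1 := by linarith
  set A : ℝ := lam / (lam - 1) with hAdef
  have hApos : 0 < A := div_pos hlam0 hlam1
  have hAmul : A * (lam - 1) = lam := div_mul_cancel₀ _ (ne_of_gt hlam1)
  -- geometric sum bound
  have hgeom : ∀ m : ℕ, ∑ d ∈ Icc 1 m, lam ^ d ≤ A * lam ^ m := by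
    intro m
    induction m with
    | zero => simpa using by positivity
    | succ k ih =>
        rw [Finset.sum_Icc_succ_top (Nat.succ_le_succ (Nat.zero_le k))]
        have hpk : (0:ℝ) < lam ^ k := pow_pos hlam0 k
        have h1 : lam ^ (k+1) = lam * lam ^ k := by ring
        nlinarith [ih, hpk, hAmul]
  -- proper divisors are ≤ n/2
  have hsub : ∀ n : ℕ, 1 ≤ n → n.properDivisors ⊆ Icc 1 (n / 2) := by
    intro n hn d hd
    rw [Nat.mem_properDivisors] at hd
    obtain ⟨hdvd, hdlt⟩ := hd
    have hd1 : 1 ≤ d := Nat.pos_of_dvd_of_pos hdvd hn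
    refine Finset.mem_Icc.mpr ⟨hd1, ?_⟩
    obtain ⟨k, hk⟩ := hdvd
    have hk2 : 2 ≤ k := by
      rcases Nat.lt_or_ge k 2 with h | h
      · interval_cases k <;> omega
      · exact h
    have h2 : d * 2 ≤ n := by
      calc d * 2 ≤ d * k := Nat.mul_le_mul_left d hk2
      _ = n := hk.symm
    exact (Nat.le_div_iff_mul_le (by norm_num)).mpr h2
  have hEnn : ∀ n : ℕ, 1 ≤ n → 0 ≤ E n := by
    intro n hn
    have := (hE n hn).1
    nlinarith [pow_pos hlam0 n]
  -- key per-n bound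
  have key : ∀ n : ℕ, 1 ≤ n → |C n - E n / n| ≤ κ₂ * A * lam ^ (n / 2) := by
    intro n hn
    have hn0 : n ≠ 0 := by omega
    have hnR : (0:ℝ) < n := by exact_mod_cast hn
    rw [hC n hn, ← Nat.cons_self_properDivisors hn0, Finset.sum_cons,
      Nat.div_self hn, ArithmeticFunction.moebius_apply_one]
    set S := ∑ d ∈ n.properDivisors, ((μ (n / d) : ℤ) : ℝ) * E d with hSdef
    have hrw : (1/(n:ℝ)) * (((1:ℤ):ℝ) * E n + S) - E n / n = S / n := by
      field_simp
      simp
    rw [hrw, abs_div, abs_of_pos hnR]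
    have hSb : |S| ≤ κ₂ * A * lam ^ (n / 2) := by
      calc |S| ≤ ∑ d ∈ n.properDivisors, |((μ (n / d) : ℤ) : ℝ) * E d| :=
            Finset.abs_sum_le_sum_abs _ _
        _ ≤ ∑ d ∈ n.properDivisors, κ₂ * lam ^ d := by
            apply Finset.sum_le_sum
            intro d hd
            have hd1 : 1 ≤ d := (Finset.mem_Icc.mp (hsub n hn hd)).1
            have hEd := hE d hd1
            have hEdnn : 0 ≤ E d := hEnn d hd1
            rw [abs_mul, abs_of_nonneg hEdnn]
            have hμ : |((μ (n / d) : ℤ) : ℝ)| ≤ 1 := by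
              rw [← Int.cast_abs]
              exact_mod_cast ArithmeticFunction.abs_moebius_le_one
            calc |((μ (n / d) : ℤ) : ℝ)| * E d ≤ 1 * E d :=
                  mul_le_mul_of_nonneg_right hμ hEdnn
              _ = E d := one_mul _
              _ ≤ κ₂ * lam ^ d := hEd.2
        _ ≤ ∑ d ∈ Icc 1 (n / 2), κ₂ * lam ^ d :=
            Finset.sum_le_sum_of_subset_of_nonneg (hsub n hn)
              (by intro d _ _; positivity)
        _ = κ₂ * ∑ d ∈ Icc 1 (n / 2), lam ^ d := by rw [Finset.mul_sum]
        _ ≤ κ₂ * (A * lam ^ (n / 2)) :=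
            mul_le_mul_of_nonneg_left (hgeom _) hκ₂.le
        _ = κ₂ * A * lam ^ (n / 2) := by ring
    calc |S| / n ≤ |S| := div_le_self (abs_nonneg _) (by exact_mod_cast hn)
      _ ≤ κ₂ * A * lam ^ (n / 2) := hSb
  -- sum of errors
  have hdiff : ∀ N : ℕ, |∑ n ∈ Icc 1 N, C n - ∑ n ∈ Icc 1 N, E n / n|
      ≤ (N : ℝ) * (κ₂ * A * lam ^ (N / 2)) := by
    intro N
    rw [← Finset.sum_sub_distrib]
    calc |∑ n ∈ Icc 1 N, (C n - E n / n)|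
        ≤ ∑ n ∈ Icc 1 N, |C n - E n / n| := Finset.abs_sum_le_sum_abs _ _
      _ ≤ ∑ n ∈ Icc 1 N, κ₂ * A * lam ^ (N / 2) := by
          apply Finset.sum_le_sum
          intro n hn
          obtain ⟨hn1, hnN⟩ := Finset.mem_Icc.mp hn
          refine (key n hn1).trans ?_
          have : lam ^ (n / 2) ≤ lam ^ (N / 2) :=
            pow_le_pow_right₀ hlam.le (Nat.div_le_div_right hnN)
          nlinarith [mul_pos hκ₂ hApos]
      _ = (N : ℝ) * (κ₂ * A * lam ^ (N / 2)) := by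
          rw [Finset.sum_const, Nat.card_Icc]
          simp [nsmul_eq_mul]
  -- lower bound on main sum
  have hTlow : ∀ N : ℕ, 1 ≤ N → κ₁ * lam ^ N / N ≤ ∑ n ∈ Icc 1 N, E n / n := by
    intro N hN
    have hNR : (0:ℝ) < N := by exact_mod_cast hN
    have hmem : N ∈ Icc 1 N := Finset.mem_Icc.mpr ⟨hN, le_refl N⟩
    have h1 : E N / N ≤ ∑ n ∈ Icc 1 N, E n / n := by
      apply Finset.single_le_sum (f := fun n => E n / (n:ℝ))
      · intro n hn
        have hn1 := (Finset.mem_Icc.mp hn).1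
        exact div_nonneg (hEnn n hn1) (by exact_mod_cast Nat.zero_le n)
      · exact hmem
    refine le_trans ?_ h1
    exact div_le_div_of_nonneg_right (hE N hN).1 hNR.le
  -- upper bound on main sum
  have hTup : ∀ N : ℕ, 1 ≤ N → ∑ n ∈ Icc 1 N, E n / n
      ≤ κ₂ * A * lam ^ (N / 2) + 2 * (κ₂ * A) * lam ^ N / N := by
    intro N hN
    have hNR : (0:ℝ) < N := by exact_mod_cast hN
    have hM : N / 2 ≤ N := Nat.div_le_self N 2
    have hsplit : ∑ n ∈ Ioc 0 (N/2), (E n / n) + ∑ n ∈ Ioc (N/2) N, (E n / n)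
        = ∑ n ∈ Ioc 0 N, E n / n :=
      Finset.sum_Ioc_consecutive _ (Nat.zero_le _) hM
    have hIcc : Icc 1 N = Ioc 0 N := rfl
    have hIcc2 : Icc 1 (N/2) = Ioc 0 (N/2) := rfl
    rw [hIcc, ← hsplit]
    have h1 : ∑ n ∈ Ioc 0 (N/2), E n / n ≤ κ₂ * A * lam ^ (N / 2) := by
      calc ∑ n ∈ Ioc 0 (N/2), E n / n ≤ ∑ n ∈ Ioc 0 (N/2), κ₂ * lam ^ n := by
            apply Finset.sum_le_sum
            intro n hn
            have hn1 : 1 ≤ n := (Finset.mem_Ioc.mp hn).1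
            calc E n / n ≤ E n := div_le_self (hEnn n hn1) (by exact_mod_cast hn1)
              _ ≤ κ₂ * lam ^ n := (hE n hn1).2
        _ = κ₂ * ∑ n ∈ Icc 1 (N/2), lam ^ n := by rw [hIcc2, Finset.mul_sum]
        _ ≤ κ₂ * (A * lam ^ (N/2)) := mul_le_mul_of_nonneg_left (hgeom _) hκ₂.le
        _ = κ₂ * A * lam ^ (N/2) := by ring
    have h2 : ∑ n ∈ Ioc (N/2) N, E n / n ≤ 2 * (κ₂ * A) * lam ^ N / N := by
      calc ∑ n ∈ Ioc (N/2) N, E n / n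
          ≤ ∑ n ∈ Ioc (N/2) N, (2 / N) * (κ₂ * lam ^ n) := by
            apply Finset.sum_le_sum
            intro n hn
            obtain ⟨hnl, hnu⟩ := Finset.mem_Ioc.mp hn
            have hn1 : 1 ≤ n := le_trans (Nat.succ_le_succ (Nat.zero_le _)) hnl
            have hnR : (0:ℝ) < n := by exact_mod_cast hn1
            have hN2n : (N : ℝ) ≤ 2 * n := by
              have : N ≤ 2 * n := by omega
              exact_mod_cast this
            have hEb : E n ≤ κ₂ * lam ^ n := (hE n hn1).2
            rw [div_le_iff₀ hnR]
            have hnn : 0 ≤ κ₂ * lam ^ n := by positivity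
            calc E n ≤ κ₂ * lam ^ n := hEb
              _ = (2 / (N:ℝ)) * (κ₂ * lam ^ n) * (N / 2) := by
                  field_simp
              _ ≤ (2 / (N:ℝ)) * (κ₂ * lam ^ n) * n := by
                  apply mul_le_mul_of_nonneg_left _ (by positivity)
                  linarith
        _ = (2 / N) * (κ₂ * ∑ n ∈ Ioc (N/2) N, lam ^ n) := by
            rw [← Finset.mul_sum, ← Finset.mul_sum]
        _ ≤ (2 / N) * (κ₂ * (A * lam ^ N)) := by
            apply mul_le_mul_of_nonneg_left _ (by positivity)
            apply mul_le_mul_of_nonneg_left _ hκ₂.le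
            refine le_trans ?_ (hgeom N)
            apply Finset.sum_le_sum_of_subset_of_nonneg
            · intro n hn
              obtain ⟨hnl, hnu⟩ := Finset.mem_Ioc.mp hn
              exact Finset.mem_Icc.mpr ⟨by omega, hnu⟩
            · intro n _ _; positivity
        _ = 2 * (κ₂ * A) * lam ^ N / N := by ring
    linarith
  -- eventual domination of the error terms
  set D : ℝ := κ₂ * A with hDdef
  have hD : 0 < D := mul_pos hκ₂ hApos
  set c : ℝ := max (2 * D / κ₁) 1 with hcdef
  have hc1 : (1:ℝ) ≤ c := le_max_right _ _
  have hc0 : (0:ℝ) < c := lt_of_lt_of_le one_pos hc1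
  have hcD : D ≤ c * κ₁ / 2 := by
    have : 2 * D / κ₁ ≤ c := le_max_left _ _
    rw [div_le_iff₀ hκ₁] at this
    linarith
  -- from polynomial vs exponential
  have htend : Tendsto (fun m : ℕ => (m : ℝ) ^ 2 / lam ^ m) atTop (nhds 0) :=
    tendsto_pow_const_div_const_pow_of_one_lt 2 hlam
  have hev : ∀ᶠ m : ℕ in atTop, (m : ℝ) ^ 2 / lam ^ m ≤ 1 / (16 * c) := by
    have h := htend.eventually (eventually_le_nhds (show (0:ℝ) < 1 / (16 * c) by positivity))
    exact h
  obtain ⟨M, hM⟩ := eventually_atTop.mp hev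
  refine ⟨κ₁ / 2, 3 * D, by positivity, by positivity, max (2 * M + 2) 2, ?_⟩
  intro N hN
  have hN2 : 2 ≤ N := le_trans (le_max_right _ _) hN
  have hN1 : 1 ≤ N := by omega
  have hNR : (0:ℝ) < N := by exact_mod_cast hN1
  -- the key inequality c * (N+1)^2 * lam^(N/2) ≤ lam^N
  have hkey : c * ((N:ℝ) + 1) ^ 2 * lam ^ (N / 2) ≤ lam ^ N := by
    set m := N / 2 with hm
    have hmM : M ≤ m := by
      have : 2 * M + 2 ≤ N := le_trans (le_max_left _ _) hN
      omega
    have hm1 : 1 ≤ m := by omega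
    have hNm : N + 1 ≤ 4 * m := by omega
    have h1 : c * ((N:ℝ) + 1) ^ 2 ≤ 16 * c * (m:ℝ) ^ 2 := by
      have hNmR : ((N:ℝ) + 1) ≤ 4 * m := by exact_mod_cast hNm
      have hNp : (0:ℝ) ≤ (N:ℝ) + 1 := by positivity
      have hsq : ((N:ℝ) + 1) * ((N:ℝ) + 1) ≤ (4 * (m:ℝ)) * (4 * (m:ℝ)) :=
        mul_le_mul hNmR hNmR hNp (by positivity)
      nlinarith [hc0, hsq]
    have h2 : 16 * c * (m:ℝ) ^ 2 ≤ lam ^ m := by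
      have := hM m hmM
      rw [div_le_div_iff₀ (pow_pos hlam0 m) (by positivity)] at this
      nlinarith [pow_pos hlam0 m]
    have h3 : lam ^ m * lam ^ m ≤ lam ^ N := by
      have : lam ^ m * lam ^ m = lam ^ (m + m) := (pow_add lam m m).symm
      rw [this]
      apply pow_le_pow_right₀ hlam.le
      omega
    have hpm : (0:ℝ) < lam ^ m := pow_pos hlam0 m
    calc c * ((N:ℝ) + 1) ^ 2 * lam ^ m ≤ 16 * c * (m:ℝ) ^ 2 * lam ^ m := by
          apply mul_le_mul_of_nonneg_right h1 hpm.le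
      _ ≤ lam ^ m * lam ^ m := mul_le_mul_of_nonneg_right h2 hpm.le
      _ ≤ lam ^ N := h3
  have herr := hdiff N
  rw [abs_le] at herr
  have hlow := hTlow N hN1
  have hup := hTup N hN1
  have hpN2 : (0:ℝ) < lam ^ (N/2) := pow_pos hlam0 _
  have hpN : (0:ℝ) < lam ^ N := pow_pos hlam0 _
  constructor
  · -- lower bound
    have herr1 : (N:ℝ) * (D * lam ^ (N/2)) ≤ (κ₁/2) * lam ^ N / N := by
      rw [le_div_iff₀ hNR]
      have h4 : (N:ℝ) * (D * lam ^ (N/2)) * N = D * (N:ℝ)^2 * lam ^ (N/2) := by ring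
      rw [h4]
      have h5 : D * (N:ℝ)^2 ≤ (κ₁/2) * (c * ((N:ℝ)+1)^2) := by
        have hN2R : (N:ℝ)^2 ≤ ((N:ℝ)+1)^2 := by nlinarith
        calc D * (N:ℝ)^2 ≤ (c * κ₁ / 2) * ((N:ℝ)+1)^2 :=
              mul_le_mul hcD hN2R (sq_nonneg _) (by positivity)
          _ = (κ₁/2) * (c * ((N:ℝ)+1)^2) := by ring
      calc D * (N:ℝ)^2 * lam ^ (N/2) ≤ (κ₁/2) * (c * ((N:ℝ)+1)^2) * lam ^ (N/2) :=
            mul_le_mul_of_nonneg_right h5 hpN2.le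
        _ = (κ₁/2) * (c * ((N:ℝ)+1)^2 * lam ^ (N/2)) := by ring
        _ ≤ (κ₁/2) * lam ^ N := mul_le_mul_of_nonneg_left hkey (by positivity)
    have : κ₁ * lam ^ N / N - (κ₁/2) * lam ^ N / N = (κ₁/2) * lam ^ N / N := by
      ring
    linarith [herr.1]
  · -- upper bound
    have herr2 : D * lam ^ (N/2) + (N:ℝ) * (D * lam ^ (N/2)) ≤ D * lam ^ N / N := by
      rw [le_div_iff₀ hNR]
      have h4 : (D * lam ^ (N/2) + (N:ℝ) * (D * lam ^ (N/2))) * N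
          = D * ((N:ℝ) * ((N:ℝ)+1)) * lam ^ (N/2) := by ring
      rw [h4]
      have h5 : D * ((N:ℝ) * ((N:ℝ)+1)) ≤ D * (c * ((N:ℝ)+1)^2) := by
        have : (N:ℝ) * ((N:ℝ)+1) ≤ c * ((N:ℝ)+1)^2 := by nlinarith
        exact mul_le_mul_of_nonneg_left this hD.le
      calc D * ((N:ℝ) * ((N:ℝ)+1)) * lam ^ (N/2)
          ≤ D * (c * ((N:ℝ)+1)^2) * lam ^ (N/2) :=
            mul_le_mul_of_nonneg_right h5 hpN2.le
        _ = D * (c * ((N:ℝ)+1)^2 * lam ^ (N/2)) := by ring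
        _ ≤ D * lam ^ N := mul_le_mul_of_nonneg_left hkey hD.le
    have hfin : 3 * D * lam ^ N / N = 2 * D * lam ^ N / N + D * lam ^ N / N := by
      ring
    rw [hfin]
    linarith [herr.2]
end

section
/- Let λ > 1, E : ℕ → ℝ with κ₁·λⁿ ≤ E(n) ≤ κ₂·λⁿ for all n ≥ 1 (κ₁, κ₂ > 0), and C(n) = (1/n)·∑_{d | n} μ(n/d)·E(d). Then there exist positive constants σ₃, σ₄ such that σ₃·log N ≤ ∑_{n=1}^{N} C(n)/λⁿ ≤ σ₄·log N for all sufficiently large N. -/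
open Finset

lemma aux_geom_Icc_le {x : ℝ} (hx : 1 < x) (m : ℕ) :
    ∑ d ∈ Icc 1 m, x ^ d ≤ x ^ (m + 1) / (x - 1) := by
  have hx0 : (0:ℝ) < x := lt_trans one_pos hx
  have h1 : (0:ℝ) < x - 1 := by linarith
  calc ∑ d ∈ Icc 1 m, x ^ d ≤ ∑ d ∈ range (m+1), x ^ d := by
        apply sum_le_sum_of_subset_of_nonneg
        · intro d hd; simp only [mem_Icc] at hd; simp only [mem_range]; omega
        · intro i _ _; positivity
    _ = (x ^ (m+1) - 1) / (x - 1) := geom_sum_eq hx.ne' _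
    _ ≤ x ^ (m + 1) / (x - 1) := by gcongr; linarith

lemma aux_geom_Icc_le' {r : ℝ} (hr0 : 0 ≤ r) (hr1 : r < 1) (N : ℕ) :
    ∑ n ∈ Icc 1 N, r ^ n ≤ (1 - r)⁻¹ := by
  have h1 : (0:ℝ) < 1 - r := by linarith
  calc ∑ n ∈ Icc 1 N, r ^ n ≤ ∑ n ∈ range (N+1), r ^ n := by
        apply sum_le_sum_of_subset_of_nonneg
        · intro d hd; simp only [mem_Icc] at hd; simp only [mem_range]; omega
        · intro i _ _; positivity
    _ = (r ^ (N+1) - 1) / (r - 1) := geom_sum_eq hr1.ne _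
    _ = (1 - r ^ (N+1)) / (1 - r) := by rw [← neg_sub (r^(N+1)) 1, ← neg_sub r 1, neg_div_neg_eq]
    _ ≤ 1 / (1 - r) := by gcongr; · nlinarith [pow_nonneg hr0 (N+1)]
    _ = (1 - r)⁻¹ := one_div _

lemma aux_proper_le_half {d n : ℕ} (h : d ∈ n.properDivisors) : d ≤ n / 2 := by
  have hd : 0 < d := Nat.pos_of_mem_properDivisors h
  rw [Nat.mem_properDivisors] at h
  obtain ⟨⟨k, hk⟩, hlt⟩ := h
  have hk2 : 2 ≤ k := by
    rcases Nat.lt_or_ge k 2 with h2 | h2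
    · interval_cases k <;> omega
    · exact h2
  have : d * 2 ≤ n := by calc d * 2 ≤ d * k := Nat.mul_le_mul_left d hk2
                              _ = n := hk.symm
  omega

lemma aux_pow_half_le {lam : ℝ} (hlam : 1 < lam) (n : ℕ) :
    lam ^ (n / 2) ≤ Real.sqrt lam ^ n := by
  have hlam0 : (0:ℝ) < lam := lt_trans one_pos hlam
  have h2 : (lam ^ (n/2))^2 ≤ (Real.sqrt lam ^ n)^2 := by
    have hrhs : (Real.sqrt lam ^ n)^2 = lam ^ n := by
      rw [← pow_mul, mul_comm, pow_mul, Real.sq_sqrt hlam0.le]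
    rw [hrhs, ← pow_mul]
    exact pow_le_pow_right₀ hlam.le (by omega)
  calc lam ^ (n/2) = Real.sqrt ((lam ^ (n/2))^2) := (Real.sqrt_sq (by positivity)).symm
    _ ≤ Real.sqrt ((Real.sqrt lam ^ n)^2) := Real.sqrt_le_sqrt h2
    _ = Real.sqrt lam ^ n := Real.sqrt_sq (by positivity)

theorem stmt_6 (lam κ₁ κ₂ : ℝ) (hlam : 1 < lam) (hκ₁ : 0 < κ₁) (hκ₂ : 0 < κ₂)
    (E : ℕ → ℝ)
    (hE : ∀ n : ℕ, 1 ≤ n → κ₁ * lam ^ n ≤ E n ∧ E n ≤ κ₂ * lam ^ n)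
    (C : ℕ → ℝ)
    (hC : ∀ n : ℕ, 1 ≤ n →
      C n = (1 / (n : ℝ)) *
        ∑ d ∈ n.divisors, ((ArithmeticFunction.moebius (n / d) : ℤ) : ℝ) * E d) :
    ∃ σ₃ σ₄ : ℝ, 0 < σ₃ ∧ 0 < σ₄ ∧ ∃ N₁ : ℕ, ∀ N : ℕ, N₁ ≤ N →
      σ₃ * Real.log N ≤ ∑ n ∈ Finset.Icc 1 N, C n / lam ^ n ∧
      ∑ n ∈ Finset.Icc 1 N, C n / lam ^ n ≤ σ₄ * Real.log N := by
  have hlam0 : (0:ℝ) < lam := lt_trans one_pos hlam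
  set s := Real.sqrt lam with hs_def
  have hs1 : 1 < s := (Real.lt_sqrt (by norm_num)).mpr (by nlinarith)
  have hs0 : (0:ℝ) < s := lt_trans one_pos hs1
  set r := s⁻¹ with hr_def
  have hr0 : (0:ℝ) < r := inv_pos.mpr hs0
  have hr1 : r < 1 := by rw [hr_def]; exact inv_lt_one_of_one_lt₀ hs1
  set K := κ₂ * lam / (lam - 1) with hK_def
  have hK0 : 0 < K := div_pos (by positivity) (by linarith)
  have key : ∀ n : ℕ, 1 ≤ n →
      κ₁ * (n:ℝ)⁻¹ - K * r ^ n ≤ C n / lam ^ n ∧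
      C n / lam ^ n ≤ κ₂ * (n:ℝ)⁻¹ + K * r ^ n := by
    intro n hn
    have hn0 : (0:ℝ) < (n:ℝ) := by exact_mod_cast hn
    have hne : n ≠ 0 := by omega
    have hpow : (0:ℝ) < lam ^ n := pow_pos hlam0 n
    set S := ∑ d ∈ n.properDivisors, ((ArithmeticFunction.moebius (n / d) : ℤ) : ℝ) * E d
      with hS_def
    have hCn : C n / lam ^ n = E n / ((n:ℝ) * lam ^ n) + S / ((n:ℝ) * lam ^ n) := by
      rw [hC n hn, ← Nat.insert_self_properDivisors hne,
        Finset.sum_insert Nat.self_notMem_properDivisors, Nat.div_self (by omega : 0 < n)]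
      simp only [ArithmeticFunction.moebius_apply_one]
      push_cast
      field_simp
      rfl
    have hSb : |S| ≤ κ₂ * lam ^ (n / 2 + 1) / (lam - 1) := by
      calc |S| ≤ ∑ d ∈ n.properDivisors,
            |((ArithmeticFunction.moebius (n / d) : ℤ) : ℝ) * E d| :=
            Finset.abs_sum_le_sum_abs _ _
        _ ≤ ∑ d ∈ n.properDivisors, κ₂ * lam ^ d := by
            apply Finset.sum_le_sum
            intro d hd
            have hd1 : 1 ≤ d := Nat.pos_of_mem_properDivisors hd
            have hEd := hE d hd1
            have hEd0 : 0 < E d := lt_of_lt_of_le (by positivity) hEd.1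
            rw [abs_mul, abs_of_pos hEd0]
            have hμ : |((ArithmeticFunction.moebius (n / d) : ℤ) : ℝ)| ≤ 1 := by
              exact_mod_cast ArithmeticFunction.abs_moebius_le_one
            calc |((ArithmeticFunction.moebius (n / d) : ℤ) : ℝ)| * E d ≤ 1 * E d :=
                  mul_le_mul_of_nonneg_right hμ hEd0.le
              _ = E d := one_mul _
              _ ≤ κ₂ * lam ^ d := hEd.2
        _ ≤ ∑ d ∈ Finset.Icc 1 (n/2), κ₂ * lam ^ d := by
            apply Finset.sum_le_sum_of_subset_of_nonneg
            · intro d hd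
              simp only [Finset.mem_Icc]
              exact ⟨Nat.pos_of_mem_properDivisors hd, aux_proper_le_half hd⟩
            · intro i _ _; positivity
        _ = κ₂ * ∑ d ∈ Finset.Icc 1 (n/2), lam ^ d := by rw [Finset.mul_sum]
        _ ≤ κ₂ * (lam ^ (n/2 + 1) / (lam - 1)) :=
            mul_le_mul_of_nonneg_left (aux_geom_Icc_le hlam _) hκ₂.le
        _ = κ₂ * lam ^ (n/2+1) / (lam - 1) := by ring
    have hmain : |S / ((n:ℝ) * lam ^ n)| ≤ K * r ^ n := by
      rw [abs_div, abs_of_pos (show (0:ℝ) < (n:ℝ) * lam ^ n by positivity)]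
      have h1 : |S| / ((n:ℝ) * lam ^ n) ≤ |S| / lam ^ n := by
        apply div_le_div_of_nonneg_left (abs_nonneg _) hpow
        exact le_mul_of_one_le_left hpow.le (by exact_mod_cast hn)
      have h2 : |S| / lam ^ n ≤ (κ₂ * lam ^ (n/2+1) / (lam - 1)) / lam ^ n := by
        gcongr
      have h3 : (κ₂ * lam ^ (n/2+1) / (lam - 1)) / lam ^ n ≤ K * r ^ n := by
        have hhalf : lam ^ (n/2+1) ≤ lam * s ^ n := by
          rw [pow_succ, mul_comm]
          exact mul_le_mul_of_nonneg_left (aux_pow_half_le hlam n) hlam0.le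
        have hsr : s ^ n / lam ^ n = r ^ n := by
          have hl : lam ^ n = s ^ n * s ^ n := by
            rw [show lam = s * s from (Real.mul_self_sqrt hlam0.le).symm, mul_pow]
          rw [hl, hr_def, inv_pow]
          field_simp
        calc (κ₂ * lam ^ (n/2+1) / (lam - 1)) / lam ^ n
            ≤ (κ₂ * (lam * s ^ n) / (lam - 1)) / lam ^ n := by gcongr
          _ = K * (s ^ n / lam ^ n) := by rw [hK_def]; ring
          _ = K * r ^ n := by rw [hsr]
      exact le_trans h1 (le_trans h2 h3)
    have hEb := hE n hn
    rw [hCn]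
    have habs := abs_le.mp hmain
    constructor
    · have h1 : κ₁ * (n:ℝ)⁻¹ ≤ E n / ((n:ℝ) * lam ^ n) := by
        rw [le_div_iff₀ (by positivity)]
        calc κ₁ * (n:ℝ)⁻¹ * ((n:ℝ) * lam ^ n) = κ₁ * lam ^ n := by field_simp
          _ ≤ E n := hEb.1
      linarith [habs.1]
    · have h1 : E n / ((n:ℝ) * lam ^ n) ≤ κ₂ * (n:ℝ)⁻¹ := by
        rw [div_le_iff₀ (by positivity)]
        calc E n ≤ κ₂ * lam ^ n := hEb.2
          _ = κ₂ * (n:ℝ)⁻¹ * ((n:ℝ) * lam ^ n) := by field_simp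
      linarith [habs.2]
  have h1r : (0:ℝ) < 1 - r := by linarith
  set B := K * (1 - r)⁻¹ with hB_def
  have hB0 : 0 < B := mul_pos hK0 (inv_pos.mpr h1r)
  have hharm : ∀ N : ℕ, ∑ n ∈ Finset.Icc 1 N, ((n:ℝ))⁻¹ = ((harmonic N : ℚ) : ℝ) := by
    intro N
    rw [harmonic_eq_sum_Icc]
    push_cast
    rfl
  have hupper : ∀ N : ℕ, ∑ n ∈ Finset.Icc 1 N, C n / lam ^ n ≤ κ₂ * (1 + Real.log N) + B := by
    intro N
    calc ∑ n ∈ Finset.Icc 1 N, C n / lam ^ n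
        ≤ ∑ n ∈ Finset.Icc 1 N, (κ₂ * (n:ℝ)⁻¹ + K * r ^ n) := by
          apply Finset.sum_le_sum
          intro n hn
          exact (key n (Finset.mem_Icc.mp hn).1).2
      _ = κ₂ * ∑ n ∈ Finset.Icc 1 N, ((n:ℝ))⁻¹ + K * ∑ n ∈ Finset.Icc 1 N, r ^ n := by
          rw [Finset.sum_add_distrib, Finset.mul_sum, Finset.mul_sum]
      _ ≤ κ₂ * (1 + Real.log N) + K * (1 - r)⁻¹ := by
          gcongr
          · rw [hharm N]
            exact harmonic_le_one_add_log N
          · exact aux_geom_Icc_le' hr0.le hr1 N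
      _ = κ₂ * (1 + Real.log N) + B := by rw [hB_def]
  have hlower : ∀ N : ℕ, 1 ≤ N →
      κ₁ * Real.log N - B ≤ ∑ n ∈ Finset.Icc 1 N, C n / lam ^ n := by
    intro N hN
    have hNR : (1:ℝ) ≤ (N:ℝ) := by exact_mod_cast hN
    have hlog : Real.log N ≤ ∑ n ∈ Finset.Icc 1 N, ((n:ℝ))⁻¹ := by
      rw [hharm N]
      calc Real.log N ≤ Real.log ((N:ℝ) + 1) := by
            apply Real.log_le_log (by linarith)
            linarith
        _ = Real.log ((N + 1 : ℕ) : ℝ) := by push_cast; ring_nf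
        _ ≤ ((harmonic N : ℚ) : ℝ) := log_add_one_le_harmonic N
    calc κ₁ * Real.log N - B
        ≤ κ₁ * ∑ n ∈ Finset.Icc 1 N, ((n:ℝ))⁻¹ - K * ∑ n ∈ Finset.Icc 1 N, r ^ n := by
          have hg := aux_geom_Icc_le' hr0.le hr1 N
          have h1 : κ₁ * Real.log N ≤ κ₁ * ∑ n ∈ Finset.Icc 1 N, ((n:ℝ))⁻¹ :=
            mul_le_mul_of_nonneg_left hlog hκ₁.le
          have h2 : K * ∑ n ∈ Finset.Icc 1 N, r ^ n ≤ B := by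
            rw [hB_def]
            exact mul_le_mul_of_nonneg_left hg hK0.le
          linarith
      _ = ∑ n ∈ Finset.Icc 1 N, (κ₁ * (n:ℝ)⁻¹ - K * r ^ n) := by
          rw [Finset.sum_sub_distrib, Finset.mul_sum, Finset.mul_sum]
      _ ≤ ∑ n ∈ Finset.Icc 1 N, C n / lam ^ n := by
          apply Finset.sum_le_sum
          intro n hn
          exact (key n (Finset.mem_Icc.mp hn).1).1
  set c := max (2 * B / κ₁) (κ₂ + B) with hc_def
  have hc0 : 0 ≤ c := le_trans (by positivity) (le_max_left _ _)
  refine ⟨κ₁ / 2, κ₂ + 1, by positivity, by positivity, ⌈Real.exp c⌉₊ + 1, ?_⟩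
  intro N hN
  have hN1 : 1 ≤ N := by omega
  have hexpN : Real.exp c ≤ (N:ℝ) := by
    calc Real.exp c ≤ (⌈Real.exp c⌉₊ : ℝ) := Nat.le_ceil _
      _ ≤ (N:ℝ) := by exact_mod_cast le_trans (Nat.le_succ _) hN
  have hcN : c ≤ Real.log N := by
    calc c = Real.log (Real.exp c) := (Real.log_exp c).symm
      _ ≤ Real.log N := Real.log_le_log (Real.exp_pos c) hexpN
  constructor
  · have h := hlower N hN1
    have hc1 : 2 * B / κ₁ ≤ Real.log N := le_trans (le_max_left _ _) hcN
    have hB2 : 2 * B ≤ Real.log N * κ₁ := (div_le_iff₀ hκ₁).mp hc1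
    linarith
  · have h := hupper N
    have hc2 : κ₂ + B ≤ Real.log N := le_trans (le_max_right _ _) hcN
    nlinarith
end
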